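/- For each γ > 0 the matrices Σ̂_{0γ} and M̂₀^⊤Σ̂_{0γ}⁻¹M̂₀ are invertible, and the feasible predictor ŷ'_γ = M̂' θ̂_{0γ} + Δ̂^⊤ Σ̂_{0γ}⁻¹ (y₀ − M̂₀ θ̂_{0γ}), where θ̂_{0γ} = (M̂₀^⊤Σ̂_{0γ}⁻¹M̂₀)⁻¹M̂₀^⊤Σ̂_{0γ}⁻¹y₀, converges as γ → ∞ to M̂'(M̂₀^⊤M̂₀)⁻¹M̂₀^⊤y₀ for every fixed y₀ ∈ ℝ^{p−q}. -/

import Mathlib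

open Matrix Filter

section Aux

variable {m k : Type*} [Fintype m] [Fintype k] [DecidableEq m] [DecidableEq k]

lemma aux_psd_smul {M : Matrix m m ℝ} (hM : M.PosSemidef) {c : ℝ} (hc : 0 ≤ c) :
    (c • M).PosSemidef := by
  refine Matrix.PosSemidef.of_dotProduct_mulVec_nonneg ?_ fun x => ?_
  · simpa [Matrix.IsHermitian, conjTranspose_smul] using congrArg (c • ·) hM.1.eq
  · have h := hM.dotProduct_mulVec_nonneg x
    simp only [Matrix.smul_mulVec, dotProduct_smul, smul_eq_mul]
    exact mul_nonneg hc h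

lemma aux_pd_smul {M : Matrix m m ℝ} (hM : M.PosDef) {c : ℝ} (hc : 0 < c) :
    (c • M).PosDef := by
  refine Matrix.PosDef.of_dotProduct_mulVec_pos ?_ fun x hx => ?_
  · simpa [Matrix.IsHermitian, conjTranspose_smul] using congrArg (c • ·) hM.1.eq
  · have h := hM.dotProduct_mulVec_pos hx
    simp only [Matrix.smul_mulVec, dotProduct_smul, smul_eq_mul]
    exact mul_pos hc h

lemma aux_pd_conj {W : Matrix m m ℝ} (hW : W.PosDef) (B : Matrix m k ℝ)
    (hB : ∀ v, B *ᵥ v = 0 → v = 0) : (Bᵀ * W * B).PosDef := by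
  have hWt : Wᵀ = W := by
    rw [← conjTranspose_eq_transpose_of_trivial]; exact hW.1.eq
  refine Matrix.PosDef.of_dotProduct_mulVec_pos ?_ fun x hx => ?_
  · show (Bᵀ * W * B)ᴴ = _
    rw [conjTranspose_eq_transpose_of_trivial, transpose_mul, transpose_mul,
      transpose_transpose, hWt, Matrix.mul_assoc]
  · have hBx : B *ᵥ x ≠ 0 := fun h => hx (hB x h)
    have h := hW.dotProduct_mulVec_pos hBx
    have hrw : (Bᵀ * W * B) *ᵥ x = Bᵀ *ᵥ (W *ᵥ (B *ᵥ x)) := by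
      rw [mulVec_mulVec, mulVec_mulVec, Matrix.mul_assoc]
    have hsx : star x = x := funext fun i => star_trivial _
    have hsbx : star (B *ᵥ x) = B *ᵥ x := funext fun i => star_trivial _
    rw [hsbx] at h
    rw [hrw, hsx, dotProduct_mulVec, vecMul_transpose]
    exact h

lemma aux_ca_mul {X : Type*} [TopologicalSpace X] {l m k : Type*} [Fintype m]
    {A : X → Matrix l m ℝ} {B : X → Matrix m k ℝ} {x : X}
    (hA : ContinuousAt A x) (hB : ContinuousAt B x) :
    ContinuousAt (fun x => A x * B x) x :=
  ContinuousAt.comp (f := fun x => (A x, B x))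
    ((continuous_fst.matrix_mul continuous_snd).continuousAt) (hA.prodMk hB)

lemma aux_ca_mulVec {X : Type*} [TopologicalSpace X] {l m : Type*} [Fintype m]
    {A : X → Matrix l m ℝ} {w : X → m → ℝ} {x : X}
    (hA : ContinuousAt A x) (hw : ContinuousAt w x) :
    ContinuousAt (fun x => A x *ᵥ w x) x :=
  ContinuousAt.comp (f := fun x => (A x, w x))
    ((continuous_fst.matrix_mulVec continuous_snd).continuousAt) (hA.prodMk hw)

lemma aux_ca_inv {X : Type*} [TopologicalSpace X] {f : X → Matrix m m ℝ} {x : X}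
    (hf : ContinuousAt f x) (h : (f x).det ≠ 0) :
    ContinuousAt (fun x => (f x)⁻¹) x := by
  refine ContinuousAt.comp (f := f) (g := Inv.inv) (continuousAt_matrix_inv (f x) ?_) hf
  rw [Ring.inverse_eq_inv']
  exact continuousAt_inv₀ h

end Aux

/-- For each γ > 0 the matrices `Σ̂_{0γ}` and `M̂₀ᵀ Σ̂_{0γ}⁻¹ M̂₀` are invertible,
and the feasible predictor `ŷ'_γ` tends, as γ → ∞, to the ATR predictor
`M̂'(M̂₀ᵀM̂₀)⁻¹M̂₀ᵀ y₀`. -/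
theorem stmt_5 (p n K q : ℕ) (hK : 0 < K) (hq : 0 < q) (hKn : K ≤ n)
    (hnpq : n < p - q)
    (X₀ : Matrix (Fin (p - q)) (Fin n) ℝ) (X' : Matrix (Fin q) (Fin n) ℝ)
    (A : Matrix (Fin n) (Fin K) ℝ)
    (hX₀ : IsUnit (X₀ᵀ * X₀)) (hA : IsUnit (Aᵀ * A))
    (M₀ : Matrix (Fin (p - q)) (Fin K) ℝ) (hM₀ : M₀ = X₀ * A * (Aᵀ * A)⁻¹)
    (M' : Matrix (Fin q) (Fin K) ℝ) (hM' : M' = X' * A * (Aᵀ * A)⁻¹)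
    (Sg : ℝ → Matrix (Fin (p - q)) (Fin (p - q)) ℝ)
    (hSg : ∀ γ : ℝ, Sg γ = X₀ * (1 - A * (Aᵀ * A)⁻¹ * Aᵀ) * X₀ᵀ
      + γ • (1 : Matrix (Fin (p - q)) (Fin (p - q)) ℝ))
    (Dt : Matrix (Fin q) (Fin (p - q)) ℝ)
    (hDt : Dt = X' * (1 - A * (Aᵀ * A)⁻¹ * Aᵀ) * X₀ᵀ)
    (y₀ : Fin (p - q) → ℝ) :
    (∀ γ : ℝ, 0 < γ → (Sg γ).PosDef ∧ IsUnit (M₀ᵀ * (Sg γ)⁻¹ * M₀)) ∧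
      Filter.Tendsto
        (fun γ : ℝ =>
          let θ₀ : Fin K → ℝ := ((M₀ᵀ * (Sg γ)⁻¹ * M₀)⁻¹ * (M₀ᵀ * (Sg γ)⁻¹)).mulVec y₀
          M'.mulVec θ₀ + (Dt * (Sg γ)⁻¹).mulVec (y₀ - M₀.mulVec θ₀))
        Filter.atTop
        (nhds ((M' * (M₀ᵀ * M₀)⁻¹ * M₀ᵀ).mulVec y₀)) := by
  have hAdet : IsUnit (Aᵀ * A).det := (Matrix.isUnit_iff_isUnit_det _).mp hA
  have hX₀det : IsUnit (X₀ᵀ * X₀).det := (Matrix.isUnit_iff_isUnit_det _).mp hX₀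
  set P : Matrix (Fin n) (Fin n) ℝ := A * (Aᵀ * A)⁻¹ * Aᵀ with hP
  set S : Matrix (Fin (p - q)) (Fin (p - q)) ℝ := X₀ * (1 - P) * X₀ᵀ with hS
  -- idempotence and symmetry of P
  have hPsymm : Pᵀ = P := by
    rw [hP]
    simp [transpose_mul, transpose_transpose, Matrix.transpose_nonsing_inv, Matrix.mul_assoc]
  have hPP : P * P = P := by
    rw [hP]
    simp only [Matrix.mul_assoc]
    rw [← Matrix.mul_assoc Aᵀ A, Matrix.nonsing_inv_mul_cancel_left _ _ hAdet]
  have hQ : (1 - P) * (1 - P) = 1 - P := by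
    rw [sub_mul, one_mul, mul_sub, mul_one, hPP, sub_self, sub_zero]
  have hQt : (1 - P)ᵀ = 1 - P := by
    rw [transpose_sub, transpose_one, hPsymm]
  -- S is positive semidefinite
  have hSpsd : S.PosSemidef := by
    have h := Matrix.posSemidef_self_mul_conjTranspose (X₀ * (1 - P))
    rw [conjTranspose_eq_transpose_of_trivial] at h
    have : X₀ * (1 - P) * (X₀ * (1 - P))ᵀ = S := by
      rw [transpose_mul, hS, Matrix.mul_assoc, Matrix.mul_assoc, ← Matrix.mul_assoc (1 - P),
        hQt, hQ]
    rwa [this] at h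
  -- injectivity of M₀
  have hM₀inj : ∀ v : Fin K → ℝ, M₀ *ᵥ v = 0 → v = 0 := by
    intro v hv
    set w : Fin n → ℝ := (A * (Aᵀ * A)⁻¹) *ᵥ v with hw
    have h1 : X₀ *ᵥ w = 0 := by
      rw [hw, mulVec_mulVec, ← Matrix.mul_assoc, ← hM₀]; exact hv
    have h2 : (X₀ᵀ * X₀) *ᵥ w = 0 := by
      rw [← mulVec_mulVec, h1, mulVec_zero]
    have h3 : w = 0 := by
      have h5 := congrArg (fun u => (X₀ᵀ * X₀)⁻¹ *ᵥ u) h2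
      simpa [Matrix.mulVec_mulVec, Matrix.nonsing_inv_mul _ hX₀det] using h5
    have h4 : Aᵀ *ᵥ w = v := by
      rw [hw, mulVec_mulVec, ← Matrix.mul_assoc, Matrix.mul_nonsing_inv _ hAdet, one_mulVec]
    rw [← h4, h3, mulVec_zero]
  -- F t := t • S + 1 is positive definite for t ≥ 0
  set F : ℝ → Matrix (Fin (p - q)) (Fin (p - q)) ℝ := fun t => t • S + 1 with hF
  have hFpd : ∀ t : ℝ, 0 ≤ t → (F t).PosDef := fun t ht =>
    Matrix.PosDef.posSemidef_add (aux_psd_smul hSpsd ht) Matrix.PosDef.one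
  have hFdet : ∀ t : ℝ, 0 ≤ t → IsUnit (F t).det := fun t ht => (hFpd t ht).det_pos.ne'.isUnit
  -- N t := M₀ᵀ (F t)⁻¹ M₀ is positive definite for t ≥ 0
  set N : ℝ → Matrix (Fin K) (Fin K) ℝ := fun t => M₀ᵀ * (F t)⁻¹ * M₀ with hN
  have hNpd : ∀ t : ℝ, 0 ≤ t → (N t).PosDef := fun t ht =>
    aux_pd_conj (hFpd t ht).inv M₀ hM₀inj
  -- Part 1
  have part1 : ∀ γ : ℝ, 0 < γ → (Sg γ).PosDef ∧ IsUnit (M₀ᵀ * (Sg γ)⁻¹ * M₀) := by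
    intro γ hγ
    have hpd : (Sg γ).PosDef := by
      rw [hSg γ]
      exact Matrix.PosDef.posSemidef_add hSpsd (aux_pd_smul Matrix.PosDef.one hγ)
    exact ⟨hpd, (aux_pd_conj hpd.inv M₀ hM₀inj).isUnit⟩
  refine ⟨part1, ?_⟩
  -- the limit function in the variable t = γ⁻¹
  set Θ : ℝ → Fin K → ℝ := fun t => ((N t)⁻¹ * (M₀ᵀ * (F t)⁻¹)) *ᵥ y₀ with hΘ
  set E : ℝ → Fin q → ℝ := fun t =>
    M' *ᵥ Θ t + (t • (Dt * (F t)⁻¹)) *ᵥ (y₀ - M₀ *ᵥ Θ t) with hE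
  -- continuity of E at 0
  have cF : Continuous F := by
    rw [hF]; exact (continuous_id.smul continuous_const).add continuous_const
  have hF0 : F 0 = 1 := by rw [hF]; simp
  have cFinv : ContinuousAt (fun t => (F t)⁻¹) 0 := by
    refine aux_ca_inv cF.continuousAt ?_
    rw [hF0]; simp
  have cN : ContinuousAt N 0 := by
    have : ContinuousAt (fun B : Matrix (Fin (p - q)) (Fin (p - q)) ℝ => M₀ᵀ * B * M₀)
        ((F 0)⁻¹) :=
      ((continuous_const.matrix_mul continuous_id).matrix_mul continuous_const).continuousAt
    exact ContinuousAt.comp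
      (g := fun B : Matrix (Fin (p - q)) (Fin (p - q)) ℝ => M₀ᵀ * B * M₀)
      (f := fun t => (F t)⁻¹) this cFinv
  have hN0 : N 0 = M₀ᵀ * M₀ := by rw [hN]; simp [hF0]
  have cNinv : ContinuousAt (fun t => (N t)⁻¹) 0 := by
    refine aux_ca_inv cN ?_
    rw [hN0]
    have : (M₀ᵀ * M₀).PosDef := by
      have h := aux_pd_conj Matrix.PosDef.one M₀ hM₀inj
      rwa [Matrix.mul_one] at h
    exact this.det_pos.ne'
  have cΘ : ContinuousAt Θ 0 :=
    aux_ca_mulVec (aux_ca_mul cNinv (aux_ca_mul continuousAt_const cFinv)) continuousAt_const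
  have cE : ContinuousAt E 0 := by
    refine ContinuousAt.add (aux_ca_mulVec continuousAt_const cΘ) ?_
    refine aux_ca_mulVec ?_ (continuousAt_const.sub (aux_ca_mulVec continuousAt_const cΘ))
    exact continuousAt_id.smul (aux_ca_mul continuousAt_const cFinv)
  -- value of E at 0
  have hE0 : E 0 = (M' * (M₀ᵀ * M₀)⁻¹ * M₀ᵀ) *ᵥ y₀ := by
    rw [hE]
    simp only [hΘ, hN0, hF0, inv_one, Matrix.mul_one, zero_smul, Matrix.zero_mulVec,
      add_zero, mulVec_mulVec, Matrix.mul_assoc]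
  -- eventual equality of the predictor with E ∘ inv
  have hevent : ∀ γ : ℝ, 1 ≤ γ →
      (M'.mulVec (((M₀ᵀ * (Sg γ)⁻¹ * M₀)⁻¹ * (M₀ᵀ * (Sg γ)⁻¹)).mulVec y₀) +
        (Dt * (Sg γ)⁻¹).mulVec
          (y₀ - M₀.mulVec (((M₀ᵀ * (Sg γ)⁻¹ * M₀)⁻¹ * (M₀ᵀ * (Sg γ)⁻¹)).mulVec y₀)))
        = E γ⁻¹ := by
    intro γ hγ
    have hγ0 : 0 < γ := lt_of_lt_of_le one_pos hγ
    have hγne : γ ≠ 0 := hγ0.ne'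
    have htne : γ⁻¹ ≠ 0 := inv_ne_zero hγne
    have ht0 : (0:ℝ) ≤ γ⁻¹ := (inv_pos.mpr hγ0).le
    haveI : Invertible γ := invertibleOfNonzero hγne
    haveI : Invertible (γ⁻¹) := invertibleOfNonzero htne
    have hSgF : Sg γ = γ • F γ⁻¹ := by
      simp only [hSg, hF, smul_add, smul_smul, mul_inv_cancel₀ hγne, one_smul]
    have hSginv : (Sg γ)⁻¹ = γ⁻¹ • (F γ⁻¹)⁻¹ := by
      rw [hSgF, Matrix.inv_smul _ γ (hFdet _ ht0), invOf_eq_inv]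
    have hMS : M₀ᵀ * (Sg γ)⁻¹ = γ⁻¹ • (M₀ᵀ * (F γ⁻¹)⁻¹) := by
      rw [hSginv, Matrix.mul_smul]
    have hNS : M₀ᵀ * (Sg γ)⁻¹ * M₀ = γ⁻¹ • N γ⁻¹ := by
      rw [hMS, Matrix.smul_mul, hN]
    have hNSinv : (M₀ᵀ * (Sg γ)⁻¹ * M₀)⁻¹ = γ • (N γ⁻¹)⁻¹ := by
      rw [hNS, Matrix.inv_smul _ γ⁻¹ ((hNpd _ ht0).det_pos.ne'.isUnit), invOf_eq_inv, inv_inv]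
    have hcomb : (M₀ᵀ * (Sg γ)⁻¹ * M₀)⁻¹ * (M₀ᵀ * (Sg γ)⁻¹)
        = (N γ⁻¹)⁻¹ * (M₀ᵀ * (F γ⁻¹)⁻¹) := by
      rw [hNSinv, hMS, Matrix.smul_mul, Matrix.mul_smul, smul_smul,
        mul_inv_cancel₀ hγne, one_smul]
    have hDS : Dt * (Sg γ)⁻¹ = γ⁻¹ • (Dt * (F γ⁻¹)⁻¹) := by
      rw [hSginv, Matrix.mul_smul]
    rw [hE]
    simp only [hΘ]
    rw [hcomb, hDS]
  -- conclude
  have h1 : Tendsto (fun γ : ℝ => E γ⁻¹) atTop (nhds (E 0)) :=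
    cE.tendsto.comp tendsto_inv_atTop_zero
  rw [hE0] at h1
  have heq : (fun γ : ℝ => E γ⁻¹) =ᶠ[atTop]
      (fun γ : ℝ =>
        M'.mulVec (((M₀ᵀ * (Sg γ)⁻¹ * M₀)⁻¹ * (M₀ᵀ * (Sg γ)⁻¹)).mulVec y₀) +
        (Dt * (Sg γ)⁻¹).mulVec
          (y₀ - M₀.mulVec (((M₀ᵀ * (Sg γ)⁻¹ * M₀)⁻¹ * (M₀ᵀ * (Sg γ)⁻¹)).mulVec y₀))) :=
    (eventually_ge_atTop 1).mono fun γ hγ => (hevent γ hγ).symm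
  exact h1.congr' heq
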